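/- Let Φ be an n×d real matrix with order-(|l|+|s|) RIP constant δ < 1, and let l, s be disjoint index sets. Then for all b ∈ R^{|s|}, ‖Φ_lᵀ Φ_s b‖₂ ≤ δ ‖b‖₂. -/

import Mathlib

open Matrix Finset

noncomputable section

/-- Number of nonzero entries of a vector. -/
def sparsity {d : ℕ} (x : Fin d → ℝ) : ℕ :=
  (Finset.univ.filter fun i => x i ≠ 0).card

/-- Squared Euclidean norm. -/
def nsq {k : Type*} [Fintype k] (v : k → ℝ) : ℝ := ∑ i, v i ^ 2

/-- Euclidean (ℓ₂) norm. -/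
def l2 {k : Type*} [Fintype k] (v : k → ℝ) : ℝ := Real.sqrt (nsq v)

/-- `Φ` satisfies the order-`t` restricted isometry property with constant `δ`. -/
def satRIP {n d : ℕ} (Φ : Matrix (Fin n) (Fin d) ℝ) (t : ℕ) (δ : ℝ) : Prop :=
  ∀ x : Fin d → ℝ, sparsity x ≤ t →
    (1 - δ) * nsq x ≤ nsq (Φ.mulVec x) ∧ nsq (Φ.mulVec x) ≤ (1 + δ) * nsq x

/-- The order-`t` RIP constant of `Φ` : the smallest `δ ≥ 0` satisfying the RIP bounds. -/
def ripConst {n d : ℕ} (Φ : Matrix (Fin n) (Fin d) ℝ) (t : ℕ) : ℝ :=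
  sInf {δ : ℝ | 0 ≤ δ ∧ satRIP Φ t δ}

/-- The submatrix of `Φ` consisting of the columns indexed by `s`. -/
def cols {n d : ℕ} (Φ : Matrix (Fin n) (Fin d) ℝ) (s : Finset (Fin d)) :
    Matrix (Fin n) {i // i ∈ s} ℝ := Φ.submatrix id (fun i => (i : Fin d))

/-- Orthogonal projection `P{Φ_s} = Φ_s (Φ_sᵀ Φ_s)⁻¹ Φ_sᵀ` onto the column span of `Φ_s`. -/
def proj {n d : ℕ} (Φ : Matrix (Fin n) (Fin d) ℝ) (s : Finset (Fin d)) :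
    Matrix (Fin n) (Fin n) ℝ :=
  cols Φ s * ((cols Φ s)ᵀ * cols Φ s)⁻¹ * (cols Φ s)ᵀ

/-- Least-squares residual `v^{⊥s} = (I - P{Φ_s}) v`. -/
def residVec {n d : ℕ} (Φ : Matrix (Fin n) (Fin d) ℝ) (s : Finset (Fin d)) (y : Fin n → ℝ) :
    Fin n → ℝ := y - (proj Φ s).mulVec y

/-- The `i`-th column of `Φ`. -/
def col {n d : ℕ} (Φ : Matrix (Fin n) (Fin d) ℝ) (i : Fin d) : Fin n → ℝ := fun k => Φ k i

/-- `x` is a least-squares estimate of `y` supported on `s`: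
it is supported on `s` and minimizes `‖y - Φ z‖₂` over all `z` supported on `s`. -/
def leastSq {n d : ℕ} (Φ : Matrix (Fin n) (Fin d) ℝ) (y : Fin n → ℝ) (s : Finset (Fin d))
    (x : Fin d → ℝ) : Prop :=
  (∀ i, i ∉ s → x i = 0) ∧
  ∀ z : Fin d → ℝ, (∀ i, i ∉ s → z i = 0) → nsq (y - Φ.mulVec x) ≤ nsq (y - Φ.mulVec z)

/-- The support of a vector, as a `Finset`. -/
def spt {d : ℕ} (x : Fin d → ℝ) : Finset (Fin d) :=
  Finset.univ.filter fun i => x i ≠ 0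

-- auxiliary lemmas

lemma nsq_nonneg {k : Type*} [Fintype k] (v : k → ℝ) : 0 ≤ nsq v :=
  Finset.sum_nonneg fun i _ => sq_nonneg _

lemma l2_nonneg {k : Type*} [Fintype k] (v : k → ℝ) : 0 ≤ l2 v := Real.sqrt_nonneg _

lemma l2_sq {k : Type*} [Fintype k] (v : k → ℝ) : l2 v ^ 2 = nsq v :=
  Real.sq_sqrt (nsq_nonneg v)

lemma ripConst_spec {n d : ℕ} (Φ : Matrix (Fin n) (Fin d) ℝ) (t : ℕ) :
    0 ≤ ripConst Φ t ∧ satRIP Φ t (ripConst Φ t) := by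
  set S : Set ℝ := {δ : ℝ | 0 ≤ δ ∧ satRIP Φ t δ} with hS
  have hne : S.Nonempty := by
    set C : ℝ := ∑ i : Fin n, ∑ j : Fin d, Φ i j ^ 2 with hC
    have hC0 : 0 ≤ C := Finset.sum_nonneg fun i _ => Finset.sum_nonneg fun j _ => sq_nonneg _
    refine ⟨1 + C, by positivity, fun x _ => ?_⟩
    have hbound : nsq (Φ.mulVec x) ≤ C * nsq x := by
      have h1 : ∀ i : Fin n, (Φ.mulVec x i) ^ 2 ≤ (∑ j, Φ i j ^ 2) * nsq x := by
        intro i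
        simpa [Matrix.mulVec, dotProduct, nsq] using
          Finset.sum_mul_sq_le_sq_mul_sq Finset.univ (fun j => Φ i j) x
      calc nsq (Φ.mulVec x) ≤ ∑ i, (∑ j, Φ i j ^ 2) * nsq x :=
            Finset.sum_le_sum fun i _ => h1 i
        _ = C * nsq x := by rw [hC, ← Finset.sum_mul]
    constructor
    · have : (1 - (1 + C)) * nsq x ≤ 0 := by nlinarith [nsq_nonneg x]
      linarith [nsq_nonneg (Φ.mulVec x)]
    · nlinarith [nsq_nonneg x]
  have hbdd : BddBelow S := ⟨0, fun δ hδ => hδ.1⟩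
  have hclosed : IsClosed S := by
    have : S = {δ : ℝ | 0 ≤ δ} ∩
        ⋂ x ∈ {x : Fin d → ℝ | sparsity x ≤ t},
          ({δ : ℝ | (1 - δ) * nsq x ≤ nsq (Φ.mulVec x)} ∩
           {δ : ℝ | nsq (Φ.mulVec x) ≤ (1 + δ) * nsq x}) := by
      ext δ
      simp only [Set.mem_inter_iff, Set.mem_setOf_eq, Set.mem_iInter, hS, satRIP]
    rw [this]
    refine isClosed_le continuous_const continuous_id |>.inter ?_
    refine isClosed_biInter fun x _ => IsClosed.inter ?_ ?_
    · exact isClosed_le (by continuity) continuous_const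
    · exact isClosed_le continuous_const (by continuity)
  have hmem : sInf S ∈ S := hclosed.csInf_mem hne hbdd
  exact hmem

lemma sparsity_add_le {d : ℕ} (x y : Fin d → ℝ) :
    sparsity (x + y) ≤ sparsity x + sparsity y := by
  unfold sparsity
  refine le_trans (Finset.card_le_card ?_) (Finset.card_union_le _ _)
  intro i hi
  simp only [Finset.mem_filter, Finset.mem_union, Finset.mem_univ, true_and,
    Pi.add_apply] at *
  by_contra h
  push_neg at h
  simp [h.1, h.2] at hi

lemma sparsity_smul_le {d : ℕ} (c : ℝ) (x : Fin d → ℝ) :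
    sparsity (c • x) ≤ sparsity x := by
  unfold sparsity
  refine Finset.card_le_card ?_
  intro i hi
  simp only [Finset.mem_filter, Finset.mem_univ, true_and, Pi.smul_apply,
    smul_eq_mul] at *
  exact fun h => hi (by simp [h])

lemma sparsity_neg {d : ℕ} (x : Fin d → ℝ) : sparsity (-x) = sparsity x := by
  unfold sparsity; congr 1; ext i; simp

lemma nsq_smul {k : Type*} [Fintype k] (c : ℝ) (v : k → ℝ) :
    nsq (c • v) = c ^ 2 * nsq v := by
  unfold nsq
  rw [Finset.mul_sum]
  exact Finset.sum_congr rfl fun i _ => by simp [mul_pow]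

-- polarization inequality step
lemma rip_ip_aux {n d : ℕ} {Φ : Matrix (Fin n) (Fin d) ℝ} {t : ℕ} {δ : ℝ}
    (hsat : satRIP Φ t δ) (x y : Fin d → ℝ)
    (hd : ∀ i, x i = 0 ∨ y i = 0) (ht : sparsity x + sparsity y ≤ t) :
    Φ.mulVec x ⬝ᵥ Φ.mulVec y ≤ δ * (nsq x + nsq y) / 2 := by
  have hcross : ∀ i, x i * y i = 0 := fun i => by rcases hd i with h | h <;> simp [h]
  have hs1 : sparsity (x + y) ≤ t := le_trans (sparsity_add_le x y) ht
  have hs2 : sparsity (x - y) ≤ t := by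
    have := sparsity_add_le x (-y)
    rw [sparsity_neg] at this
    simpa [sub_eq_add_neg] using le_trans this ht
  have h1 := (hsat (x + y) hs1).2
  have h2 := (hsat (x - y) hs2).1
  have hadd : nsq (x + y) = nsq x + nsq y := by
    unfold nsq
    rw [← Finset.sum_add_distrib]
    exact Finset.sum_congr rfl fun i _ => by
      have h := hcross i; simp only [Pi.add_apply]; linear_combination 2 * h
  have hsub : nsq (x - y) = nsq x + nsq y := by
    unfold nsq
    rw [← Finset.sum_add_distrib]
    exact Finset.sum_congr rfl fun i _ => by
      have h := hcross i; simp only [Pi.sub_apply]; linear_combination (-2) * h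
  have hpol : nsq (Φ.mulVec (x + y)) - nsq (Φ.mulVec (x - y))
      = 4 * (Φ.mulVec x ⬝ᵥ Φ.mulVec y) := by
    rw [Matrix.mulVec_add, Matrix.mulVec_sub]
    unfold nsq dotProduct
    rw [← Finset.sum_sub_distrib, Finset.mul_sum]
    exact Finset.sum_congr rfl fun i _ => by simp only [Pi.add_apply, Pi.sub_apply]; ring
  rw [hadd] at h1
  rw [hsub] at h2
  linarith

lemma rip_ip {n d : ℕ} {Φ : Matrix (Fin n) (Fin d) ℝ} {t : ℕ} {δ : ℝ}
    (hsat : satRIP Φ t δ) (hδ0 : 0 ≤ δ) (x y : Fin d → ℝ)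
    (hd : ∀ i, x i = 0 ∨ y i = 0) (ht : sparsity x + sparsity y ≤ t) :
    Φ.mulVec x ⬝ᵥ Φ.mulVec y ≤ δ * l2 x * l2 y := by
  by_cases hx : nsq x = 0
  · have hx0 : x = 0 := by
      funext i
      have := (Finset.sum_eq_zero_iff_of_nonneg (fun i _ => sq_nonneg (x i))).1 hx i
        (Finset.mem_univ i)
      exact pow_eq_zero_iff (by norm_num) |>.1 this
    simp only [hx0, Matrix.mulVec_zero, Matrix.zero_mulVec, zero_dotProduct]
    exact mul_nonneg (mul_nonneg hδ0 (l2_nonneg _)) (l2_nonneg _)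
  by_cases hy : nsq y = 0
  · have hy0 : y = 0 := by
      funext i
      have := (Finset.sum_eq_zero_iff_of_nonneg (fun i _ => sq_nonneg (y i))).1 hy i
        (Finset.mem_univ i)
      exact pow_eq_zero_iff (by norm_num) |>.1 this
    simp only [hy0, Matrix.mulVec_zero, dotProduct_zero]
    exact mul_nonneg (mul_nonneg hδ0 (l2_nonneg _)) (l2_nonneg _)
  have hα : 0 < l2 x := Real.sqrt_pos.2 (lt_of_le_of_ne (nsq_nonneg x) (Ne.symm hx))
  have hβ : 0 < l2 y := Real.sqrt_pos.2 (lt_of_le_of_ne (nsq_nonneg y) (Ne.symm hy))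
  set α := l2 x
  set β := l2 y
  set c : ℝ := Real.sqrt (β / α) with hc
  have hc0 : 0 < c := Real.sqrt_pos.2 (by positivity)
  have hc2 : c ^ 2 = β / α := Real.sq_sqrt (by positivity)
  have hd' : ∀ i, (c • x) i = 0 ∨ (c⁻¹ • y) i = 0 := by
    intro i
    rcases hd i with h | h
    · left; simp [h]
    · right; simp [h]
  have ht' : sparsity (c • x) + sparsity (c⁻¹ • y) ≤ t :=
    le_trans (add_le_add (sparsity_smul_le _ _) (sparsity_smul_le _ _)) ht
  have key := rip_ip_aux hsat (c • x) (c⁻¹ • y) hd' ht'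
  have hdot : Φ.mulVec (c • x) ⬝ᵥ Φ.mulVec (c⁻¹ • y) = Φ.mulVec x ⬝ᵥ Φ.mulVec y := by
    rw [Matrix.mulVec_smul, Matrix.mulVec_smul, smul_dotProduct, dotProduct_smul]
    field_simp
    rw [smul_smul, mul_one_div_cancel hc0.ne', one_smul]
  have hnx : nsq (c • x) = α * β := by
    rw [nsq_smul, hc2, ← l2_sq x]
    field_simp; ring
  have hny : nsq (c⁻¹ • y) = α * β := by
    rw [nsq_smul, inv_pow, hc2, ← l2_sq y]
    field_simp; ring
  rw [hdot, hnx, hny] at key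
  calc Φ.mulVec x ⬝ᵥ Φ.mulVec y ≤ δ * (α * β + α * β) / 2 := key
    _ = δ * α * β := by ring

/-- Extend a vector indexed by a finset `s` to a vector on `Fin d`, zero off `s`. -/
def extVec {d : ℕ} (s : Finset (Fin d)) (b : {i // i ∈ s} → ℝ) : Fin d → ℝ :=
  fun i => if h : i ∈ s then b ⟨i, h⟩ else 0

lemma extVec_mem {d : ℕ} (s : Finset (Fin d)) (b : {i // i ∈ s} → ℝ) {i : Fin d}
    (h : extVec s b i ≠ 0) : i ∈ s := by
  by_contra hi
  exact h (dif_neg hi)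

lemma sparsity_extVec {d : ℕ} (s : Finset (Fin d)) (b : {i // i ∈ s} → ℝ) :
    sparsity (extVec s b) ≤ s.card := by
  unfold sparsity
  exact Finset.card_le_card fun i hi => extVec_mem s b (Finset.mem_filter.1 hi).2

lemma sum_extVec {d : ℕ} (s : Finset (Fin d)) (b : {i // i ∈ s} → ℝ)
    (f : Fin d → ℝ → ℝ) (hf : ∀ i, f i 0 = 0) :
    ∑ i, f i (extVec s b i) = ∑ j : {i // i ∈ s}, f (j : Fin d) (b j) := by
  rw [Finset.univ_eq_attach,
    ← Finset.sum_subset (Finset.subset_univ s)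
      (fun i _ hi => by rw [show extVec s b i = 0 from dif_neg hi, hf]),
    ← Finset.sum_attach s (fun j => f j (extVec s b j))]
  refine Finset.sum_congr rfl fun j _ => ?_
  rw [show extVec s b (j : Fin d) = b j from dif_pos j.2]

lemma mulVec_extVec {n d : ℕ} (Φ : Matrix (Fin n) (Fin d) ℝ) (s : Finset (Fin d))
    (b : {i // i ∈ s} → ℝ) : Φ.mulVec (extVec s b) = (cols Φ s).mulVec b := by
  funext k
  have := sum_extVec s b (fun j v => Φ k j * v) (fun i => mul_zero _)
  simpa [Matrix.mulVec, dotProduct, cols] using this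

lemma nsq_extVec {d : ℕ} (s : Finset (Fin d)) (b : {i // i ∈ s} → ℝ) :
    nsq (extVec s b) = nsq b := by
  have := sum_extVec s b (fun _ v => v ^ 2) (fun i => by norm_num)
  simpa [nsq] using this

lemma l2_extVec {d : ℕ} (s : Finset (Fin d)) (b : {i // i ∈ s} → ℝ) :
    l2 (extVec s b) = l2 b := by
  unfold l2
  rw [nsq_extVec]

/-- for disjoint `l, s` and `δ_{|l|+|s|} < 1`, `‖Φ_lᵀ Φ_s b‖₂ ≤ δ ‖b‖₂`. -/
theorem stmt1 {n d : ℕ} (Φ : Matrix (Fin n) (Fin d) ℝ) (l s : Finset (Fin d))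
    (hdisj : Disjoint l s) (hδ : ripConst Φ (l.card + s.card) < 1)
    (b : {i // i ∈ s} → ℝ) :
    l2 (((cols Φ l)ᵀ * cols Φ s).mulVec b) ≤ ripConst Φ (l.card + s.card) * l2 b := by
  obtain ⟨hδ0, hsat⟩ := ripConst_spec Φ (l.card + s.card)
  set δ := ripConst Φ (l.card + s.card) with hδdef
  set u : Fin n → ℝ := (cols Φ s).mulVec b with hu
  set a : {i // i ∈ l} → ℝ := (cols Φ l)ᵀ.mulVec u with ha
  have hvec : ((cols Φ l)ᵀ * cols Φ s).mulVec b = a := by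
    rw [← Matrix.mulVec_mulVec, ha, hu]
  rw [hvec]
  have hd' : ∀ i, extVec l a i = 0 ∨ extVec s b i = 0 := by
    intro i
    by_contra h
    push_neg at h
    exact Finset.disjoint_left.1 hdisj (extVec_mem l a h.1) (extVec_mem s b h.2)
  have ht : sparsity (extVec l a) + sparsity (extVec s b) ≤ l.card + s.card :=
    add_le_add (sparsity_extVec l a) (sparsity_extVec s b)
  have key := rip_ip hsat hδ0 (extVec l a) (extVec s b) hd' ht
  rw [mulVec_extVec, mulVec_extVec, l2_extVec, l2_extVec] at key
  have hinner : (cols Φ l).mulVec a ⬝ᵥ (cols Φ s).mulVec b = nsq a := by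
    calc (cols Φ l).mulVec a ⬝ᵥ u = Matrix.vecMul a (cols Φ l)ᵀ ⬝ᵥ u := by
          rw [Matrix.vecMul_transpose]
      _ = a ⬝ᵥ (cols Φ l)ᵀ.mulVec u := (Matrix.dotProduct_mulVec a _ u).symm
      _ = a ⬝ᵥ a := by rw [← ha]
      _ = nsq a := by
          unfold nsq dotProduct
          exact Finset.sum_congr rfl fun i _ => (sq (a i)).symm
  rw [hinner] at key
  have hsq : l2 a ^ 2 ≤ δ * l2 a * l2 b := by rw [l2_sq]; exact key
  by_cases h0 : l2 a = 0
  · rw [h0]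
    exact mul_nonneg hδ0 (l2_nonneg b)
  · have hpos : 0 < l2 a := lt_of_le_of_ne (l2_nonneg a) (Ne.symm h0)
    nlinarith [hsq, hpos]
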